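/- Let F : ℝ^d → ℝ^d be Lipschitz, let v : ℝ^d → ℝ^d be bounded Borel, and let Y : [0,1] → ℝ^d be an absolutely continuous curve with Y'(s) = v(Y(s)) for a.e. s. Then for a.e. s ∈ [0,1] such that s is a Lebesgue point of r ↦ v(Y(r)) and F is differentiable at Y(s) in the direction v(Y(s)), the map s ↦ F(Y(s)) is differentiable at s with derivative DF(Y(s))[v(Y(s))]. -/

import Mathlib

open MeasureTheory Set Filter

/-- Let `F` be Lipschitz, `v` bounded Borel, and `Y : [0,1] → ℝ^d`
absolutely continuous with `Y' = v(Y)` a.e. Then for a.e. `s ∈ [0,1]` such that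
`s` is a Lebesgue point of `r ↦ v(Y(r))` and `F` is differentiable at `Y(s)` in
the direction `v(Y(s))` (with directional derivative `L`), the map
`s ↦ F(Y(s))` is differentiable at `s` with derivative `L = DF(Y(s))[v(Y(s))]`. -/
theorem chain_rule_along_flow_at_lebesgue_points (d : ℕ) (K : NNReal) (C : ℝ)
    (F : (Fin d → ℝ) → (Fin d → ℝ)) (v : (Fin d → ℝ) → (Fin d → ℝ))
    (Y : ℝ → (Fin d → ℝ))
    (hF : LipschitzWith K F)
    (hvmeas : Measurable v) (hvbdd : ∀ x, ‖v x‖ ≤ C)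
    (hY : ∀ a b : ℝ, 0 ≤ a → a ≤ b → b ≤ 1 →
      Y b - Y a = ∫ r in a..b, v (Y r)) :
    ∀ᵐ s ∂(volume.restrict (Icc (0:ℝ) 1)), ∀ L : Fin d → ℝ,
      Tendsto (fun h : ℝ => |h|⁻¹ * |∫ r in s..(s+h), ‖v (Y r) - v (Y s)‖|)
        (nhdsWithin 0 {0}ᶜ) (nhds 0) →
      Tendsto (fun h : ℝ => h⁻¹ • (F (Y s + h • v (Y s)) - F (Y s)))
        (nhdsWithin 0 {0}ᶜ) (nhds L) →
      HasDerivAt (fun r => F (Y r)) L s := by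
  -- Y is Lipschitz (hence continuous) on [0,1]
  have hYlip : ∀ a b : ℝ, a ∈ Icc (0:ℝ) 1 → b ∈ Icc (0:ℝ) 1 →
      ‖Y b - Y a‖ ≤ max C 0 * |b - a| := by
    have key : ∀ a b : ℝ, a ∈ Icc (0:ℝ) 1 → b ∈ Icc (0:ℝ) 1 → a ≤ b →
        ‖Y b - Y a‖ ≤ max C 0 * |b - a| := by
      intro a b ha hb hab
      rw [hY a b ha.1 hab hb.2]
      exact intervalIntegral.norm_integral_le_of_norm_le_const
        (fun x _ => (hvbdd (Y x)).trans (le_max_left _ _))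
    intro a b ha hb
    rcases le_total a b with hab | hab
    · exact key a b ha hb hab
    · rw [norm_sub_rev, abs_sub_comm]; exact key b a hb ha hab
  have hYcont : ContinuousOn Y (Icc (0:ℝ) 1) := by
    have : LipschitzOnWith (Real.toNNReal (max C 0)) Y (Icc (0:ℝ) 1) := by
      apply LipschitzOnWith.of_dist_le_mul
      intro x hx y hy
      rw [dist_eq_norm, dist_eq_norm, norm_sub_rev, Real.norm_eq_abs, abs_sub_comm,
        Real.coe_toNNReal _ (le_max_right _ _)]
      exact hYlip x y hx hy
    exact this.continuousOn
  have hYae : AEMeasurable Y (volume.restrict (Icc (0:ℝ) 1)) :=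
    hYcont.aemeasurable measurableSet_Icc
  have hint : ∀ a b : ℝ, a ∈ Icc (0:ℝ) 1 → b ∈ Icc (0:ℝ) 1 →
      IntervalIntegrable (fun r => v (Y r)) volume a b := by
    intro a b ha hb
    have hsub : Set.uIoc a b ⊆ Icc (0:ℝ) 1 :=
      (Set.uIoc_subset_uIcc).trans (Set.uIcc_subset_Icc ha hb)
    have hle : volume.restrict (Set.uIoc a b) ≤ volume.restrict (Icc (0:ℝ) 1) :=
      Measure.restrict_mono hsub le_rfl
    have hmeas : AEMeasurable (fun r => v (Y r)) (volume.restrict (Set.uIoc a b)) :=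
      hvmeas.comp_aemeasurable (hYae.mono_measure hle)
    refine (intervalIntegrable_const (c := max C 0)).mono_fun
      hmeas.aestronglyMeasurable ?_
    filter_upwards with x
    rw [Real.norm_eq_abs, abs_of_nonneg (le_max_right _ _)]
    exact (hvbdd (Y x)).trans (le_max_left _ _)
  -- a.e. point of [0,1] is in (0,1)
  have hIoo : ∀ᵐ s ∂(volume.restrict (Icc (0:ℝ) 1)), s ∈ Ioo (0:ℝ) 1 := by
    rw [ae_restrict_iff' measurableSet_Icc, ae_iff]
    refine measure_mono_null (fun x hx => ?_) (?_ : volume ({(0:ℝ), 1} : Set ℝ) = 0)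
    · simp only [mem_setOf_eq, _root_.not_imp] at hx
      obtain ⟨hxI, hxn⟩ := hx
      simp only [mem_Ioo, not_and_or, not_lt] at hxn
      rcases hxn with h | h
      · exact Or.inl (le_antisymm h hxI.1)
      · exact Or.inr (le_antisymm hxI.2 h)
    · exact Set.Finite.measure_zero (Set.toFinite _) volume
  filter_upwards [hIoo] with s hs
  intro L hLeb hdir
  set c := v (Y s) with hc
  have hsI : s ∈ Icc (0:ℝ) 1 := ⟨hs.1.le, hs.2.le⟩
  rw [hasDerivAt_iff_tendsto_slope]
  have hmap : Tendsto (fun y : ℝ => y - s) (nhdsWithin s {s}ᶜ) (nhdsWithin 0 {0}ᶜ) := by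
    apply tendsto_nhdsWithin_of_tendsto_nhds_of_eventually_within
    · have h0 : Tendsto (fun y : ℝ => y - s) (nhds s) (nhds (s - s)) :=
        (continuous_id.sub continuous_const).tendsto s
      simpa using h0.mono_left nhdsWithin_le_nhds
    · filter_upwards [self_mem_nhdsWithin] with y hy
      simpa [sub_eq_zero] using hy
  have hsmall : ∀ᶠ h : ℝ in nhdsWithin 0 {0}ᶜ, s + h ∈ Icc (0:ℝ) 1 := by
    have h1 : ∀ᶠ h : ℝ in nhds (0:ℝ), s + h ∈ Ioo (0:ℝ) 1 := by
      have hc0 : ContinuousAt (fun h : ℝ => s + h) 0 := by fun_prop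
      have := hc0.eventually_mem (isOpen_Ioo.mem_nhds (by simpa using hs))
      simpa using this
    exact (h1.mono fun h hh => Ioo_subset_Icc_self hh).filter_mono nhdsWithin_le_nhds
  have hE : ∀ᶠ h : ℝ in nhdsWithin 0 {0}ᶜ,
      Y (s+h) - (Y s + h • c) = ∫ r in s..(s+h), (v (Y r) - c) := by
    filter_upwards [hsmall] with h hh
    have hdiffY : Y (s+h) - Y s = ∫ r in s..(s+h), v (Y r) := by
      rcases le_or_gt 0 h with h0 | h0
      · exact hY s (s+h) hsI.1 (by linarith) hh.2
      · rw [intervalIntegral.integral_symm, ← hY (s+h) s hh.1 (by linarith) hsI.2]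
        abel
    rw [intervalIntegral.integral_sub (hint s (s+h) hsI hh) intervalIntegrable_const,
      intervalIntegral.integral_const, ← hdiffY]
    simp only [add_sub_cancel_left]
    abel
  have hB : Tendsto (fun h : ℝ => h⁻¹ • (F (Y (s+h)) - F (Y s + h • c)))
      (nhdsWithin 0 {0}ᶜ) (nhds 0) := by
    have hbound : ∀ᶠ h : ℝ in nhdsWithin 0 {0}ᶜ,
        ‖h⁻¹ • (F (Y (s+h)) - F (Y s + h • c))‖ ≤
          (K : ℝ) * (|h|⁻¹ * |∫ r in s..(s+h), ‖v (Y r) - c‖|) := by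
      filter_upwards [hE] with h hEh
      rw [norm_smul, norm_inv, Real.norm_eq_abs]
      have h1 : ‖F (Y (s+h)) - F (Y s + h • c)‖ ≤ (K : ℝ) * ‖Y (s+h) - (Y s + h • c)‖ := by
        have := hF.dist_le_mul (Y (s+h)) (Y s + h • c)
        simpa [dist_eq_norm] using this
      have h2 : ‖Y (s+h) - (Y s + h • c)‖ ≤ |∫ r in s..(s+h), ‖v (Y r) - c‖| := by
        rw [hEh]
        exact intervalIntegral.norm_integral_le_abs_integral_norm
      calc |h|⁻¹ * ‖F (Y (s+h)) - F (Y s + h • c)‖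
          ≤ |h|⁻¹ * ((K : ℝ) * |∫ r in s..(s+h), ‖v (Y r) - c‖|) := by
            apply mul_le_mul_of_nonneg_left _ (inv_nonneg.2 (abs_nonneg h))
            exact h1.trans (mul_le_mul_of_nonneg_left h2 K.coe_nonneg)
        _ = (K : ℝ) * (|h|⁻¹ * |∫ r in s..(s+h), ‖v (Y r) - c‖|) := by ring
    have hK : Tendsto (fun h : ℝ =>
        (K : ℝ) * (|h|⁻¹ * |∫ r in s..(s+h), ‖v (Y r) - c‖|))
        (nhdsWithin 0 {0}ᶜ) (nhds 0) := by
      simpa using hLeb.const_mul (K : ℝ)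
    exact squeeze_zero_norm' hbound hK
  have key : Tendsto (fun h : ℝ => h⁻¹ • (F (Y (s+h)) - F (Y s)))
      (nhdsWithin 0 {0}ᶜ) (nhds L) := by
    have hsum := hdir.add hB
    rw [add_zero] at hsum
    refine hsum.congr fun h => ?_
    rw [← smul_add]
    congr 1
    abel
  refine (key.comp hmap).congr fun y => ?_
  simp [slope, Function.comp, vsub_eq_sub]
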